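/- The Witt algebra W(1;n) equals its derived algebra; concretely, the Φ-linear span of the set {f · ∂(g) − g · ∂(f) : f, g ∈ O(1;n)} is all of O(1;n). (Consequently, the Jordan algebra J associated to the J-ternary algebra O(1;n) is the whole of O(1;n) with its commutative product.) -/

import Mathlib

/-- The product of the divided power algebra `O(1;n)`, written in coordinates with
respect to the basis `e_0, …, e_{3^n - 1}`: it is the bilinear product determined by
`e_i · e_j = binom(i+j, i) e_{i+j}`, where `e_k = 0` for `k ≥ 3^n`. -/
def omul (Φ : Type*) [Field Φ] (n : ℕ) (f g : Fin (3 ^ n) → Φ) : Fin (3 ^ n) → Φ :=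
  fun k => ∑ i : Fin (3 ^ n), ∑ j : Fin (3 ^ n),
    if (i : ℕ) + (j : ℕ) = (k : ℕ)
    then (((i : ℕ) + (j : ℕ)).choose (i : ℕ) : Φ) * f i * g j
    else 0

/-- The basis element `e_i` of `O(1;n)`. -/
def eb (Φ : Type*) [Field Φ] (n : ℕ) (i : Fin (3 ^ n)) : Fin (3 ^ n) → Φ :=
  Pi.single i 1

/-- The linear map `∂` on `O(1;n)`, with `∂ e_0 = 0` and `∂ e_i = e_{i-1}`;
in coordinates, `(∂ f)_k = f_{k+1}` (interpreted as `0` when `k + 1 ≥ 3^n`). -/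
def odel (Φ : Type*) [Field Φ] (n : ℕ) (f : Fin (3 ^ n) → Φ) : Fin (3 ^ n) → Φ :=
  fun k => if h : (k : ℕ) + 1 < 3 ^ n then f ⟨(k : ℕ) + 1, h⟩ else 0

section Aux
variable (Φ : Type*) [Field Φ] (n : ℕ)

lemma omul_single (a b : Fin (3^n)) : omul Φ n (Pi.single a 1) (Pi.single b 1) =
    fun k : Fin (3^n) => if (a : ℕ) + (b : ℕ) = (k : ℕ) then (((a:ℕ)+(b:ℕ)).choose a : Φ) else 0 := by
  funext k
  simp only [omul, Pi.single_apply]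
  rw [Finset.sum_eq_single a, Finset.sum_eq_single b]
  · simp
  · intro j _ hj; simp [hj]
  · simp
  · intro i _ hi
    rw [Finset.sum_eq_single b]
    · simp [hi]
    · intro j _ hj; simp [hj]
    · simp
  · simp

lemma omul_e0_left (f : Fin (3^n) → Φ) (h : 0 < 3^n) : omul Φ n (Pi.single ⟨0,h⟩ 1) f = f := by
  funext k
  simp only [omul, Pi.single_apply]
  rw [Finset.sum_eq_single ⟨0,h⟩]
  · rw [Finset.sum_eq_single k] <;> simp
    intro j hj; simp [Fin.val_injective.ne hj]
  · intro i _ hi; simp only [hi, if_false, mul_zero, zero_mul, ite_self, Finset.sum_const_zero]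
  · simp

lemma omul_zero_right (f : Fin (3^n) → Φ) : omul Φ n f 0 = 0 := by
  funext k; simp [omul]

lemma odel_e0 (h : 0 < 3^n) : odel Φ n (Pi.single ⟨0,h⟩ (1:Φ)) = 0 := by
  funext k
  simp only [odel]
  split
  · rw [Pi.single_apply]
    simp only [Pi.zero_apply, ite_eq_right_iff]
    intro he
    exact absurd (congrArg Fin.val he) (by simp)
  · rfl

lemma odel_succ (a k : Fin (3^n)) (ha : (a:ℕ) = (k:ℕ) + 1) :
    odel Φ n (Pi.single a (1:Φ)) = Pi.single k 1 := by
  funext m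
  simp only [odel]
  split
  · next h =>
    rw [Pi.single_apply, Pi.single_apply]
    congr 1
    simp [Fin.ext_iff, ha, eq_comm]
  · next h =>
    rw [Pi.single_apply, if_neg]
    intro he
    subst he
    exact h (ha ▸ a.isLt)

end Aux

/-- The Witt algebra `W(1;n)` equals its derived algebra: the `Φ`-linear span of the
set `{f·∂(g) − g·∂(f) : f, g ∈ O(1;n)}` is all of `O(1;n)`. -/
theorem witt_perfect (Φ : Type*) [Field Φ] [CharP Φ 3] (n : ℕ) (hn : 1 ≤ n) :
    Submodule.span Φ
        {x : Fin (3 ^ n) → Φ |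
          ∃ f g, x = omul Φ n f (odel Φ n g) - omul Φ n g (odel Φ n f)} = ⊤ := by
  set S := Submodule.span Φ
        {x : Fin (3 ^ n) → Φ |
          ∃ f g, x = omul Φ n f (odel Φ n g) - omul Φ n g (odel Φ n f)} with hS
  have h3 : (3:ℕ) ≤ 3^n := by
    calc (3:ℕ) = 3^1 := rfl
    _ ≤ 3^n := Nat.pow_le_pow_right (by norm_num) hn
  have h0 : 0 < 3^n := by omega
  have hsingle : ∀ k : Fin (3^n), Pi.single k (1:Φ) ∈ S := by
    intro k
    rcases lt_or_eq_of_le (Nat.succ_le_of_lt k.isLt) with hk | hk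
    · -- k + 1 < 3^n : use bracket(e_{k+1}, e_0) = -e_k
      set a : Fin (3^n) := ⟨(k:ℕ)+1, hk⟩ with hadef
      have hz : omul Φ n (Pi.single a 1) (odel Φ n (Pi.single ⟨0,h0⟩ 1))
          - omul Φ n (Pi.single ⟨0,h0⟩ 1) (odel Φ n (Pi.single a 1)) ∈ S :=
        Submodule.subset_span ⟨Pi.single a 1, Pi.single ⟨0,h0⟩ 1, rfl⟩
      rw [odel_e0, omul_zero_right, odel_succ Φ n a k rfl, omul_e0_left, zero_sub] at hz
      simpa using S.neg_mem hz
    · -- k = 3^n - 1 (top element): use bracket(e_1, e_k)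
      have h1 : (1:ℕ) < 3^n := by omega
      have hkm : (3:ℕ)^n - 2 < 3^n := by omega
      set e1 : Fin (3^n) := ⟨1, h1⟩
      set km : Fin (3^n) := ⟨3^n - 2, hkm⟩
      have hz : omul Φ n (Pi.single e1 1) (odel Φ n (Pi.single k 1))
          - omul Φ n (Pi.single k 1) (odel Φ n (Pi.single e1 1)) ∈ S :=
        Submodule.subset_span ⟨Pi.single e1 1, Pi.single k 1, rfl⟩
      rw [odel_succ Φ n k km (by simp [km]; omega),
          odel_succ Φ n e1 ⟨0,h0⟩ rfl, omul_single, omul_single] at hz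
      have heq : (fun m : Fin (3^n) => if (e1:ℕ) + (km:ℕ) = (m:ℕ) then (((e1:ℕ)+(km:ℕ)).choose e1 : Φ) else 0)
          - (fun m : Fin (3^n) => if (k:ℕ) + ((⟨0,h0⟩ : Fin (3^n)):ℕ) = (m:ℕ) then (((k:ℕ)+((⟨0,h0⟩ : Fin (3^n)):ℕ)).choose k : Φ) else 0)
          = Pi.single k 1 := by
        funext m
        have hk' : (k:ℕ) = 3^n - 1 := by omega
        have h1km : (e1:ℕ) + (km:ℕ) = (k:ℕ) := by simp [e1, km]; omega
        have hch : ((e1:ℕ)+(km:ℕ)).choose e1 = 3^n - 1 := by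
          rw [h1km, hk']
          exact Nat.choose_one_right _
        simp only [Pi.sub_apply, h1km, hch, Nat.add_zero, Nat.choose_self, Pi.single_apply]
        by_cases hm : (k:ℕ) = (m:ℕ)
        · rw [if_pos hm, if_pos hm, if_pos (Fin.ext hm.symm ▸ rfl)]
          have : ((3^n - 1 : ℕ) : Φ) = -1 := by
            have : ((3^n : ℕ) : Φ) = 0 := by
              push_cast
              rw [show ((3:Φ)) = ((3:ℕ):Φ) by norm_num, CharP.cast_eq_zero Φ 3]
              exact zero_pow (by omega)
            rw [Nat.cast_sub (by omega), this]
            simp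
          have h30 : (3:Φ) = 0 := by
            rw [show ((3:Φ)) = ((3:ℕ):Φ) by norm_num, CharP.cast_eq_zero Φ 3]
          rw [Nat.choose_one_right, hk', this, Nat.cast_one]
          linear_combination -h30
        · rw [if_neg hm, if_neg hm, if_neg (fun he => hm (congrArg Fin.val he).symm)]
          ring
      rw [heq] at hz
      exact hz
  rw [eq_top_iff]
  rintro x -
  have hx : x = ∑ i : Fin (3^n), x i • (Pi.single i (1:Φ) : Fin (3^n) → Φ) := by
    funext m
    rw [Finset.sum_apply]
    rw [Finset.sum_eq_single m]
    · simp
    · intro i _ hi; simp [Pi.single_apply, Fin.val_injective.ne hi, hi]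
    · simp
  rw [hx]
  exact Submodule.sum_mem S fun i _ => S.smul_mem _ (hsingle i)
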